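/- Let f(y) = y·e^{1−y}. Then there exists exactly one pair (α, γ) ∈ (1,∞) × (1,∞) satisfying the pair of equations γ·f(γ) + (1/α)·f(1/α) = 1 and f(γ) + f(1/α) = 1. -/

import Mathlib

set_option maxHeartbeats 1600000


/-- The function `f(y) = y · e^{1-y}` from the large-deviations lower bound. -/
noncomputable def fLD (y : ℝ) : ℝ := y * Real.exp (1 - y)

noncomputable def Q1 (p : ℝ) : ℝ := (p + p^2) / (Real.exp p - 1 - p)
noncomputable def P2 (q : ℝ) : ℝ := (q - q^2) * Real.exp q / (1 - (1 - q) * Real.exp q)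
noncomputable def Zf (p : ℝ) : ℝ := p - P2 (Q1 p)

lemma expD_pos {p : ℝ} (hp : 0 < p) : 0 < Real.exp p - 1 - p := by
  have := Real.add_one_lt_exp (ne_of_gt hp); linarith

lemma K_pos {q : ℝ} (h1 : q < 1) (h0 : 0 < q) : 0 < 1 - (1 - q) * Real.exp q := by
  have h := Real.add_one_lt_exp (x := -q) (by intro h; apply absurd h; simp; linarith)
  have hE : (0:ℝ) < Real.exp q := Real.exp_pos q
  have h2 : (1 - q) * Real.exp q < Real.exp (-q) * Real.exp q := by
    apply mul_lt_mul_of_pos_right _ hE; linarith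
  rw [← Real.exp_add] at h2; simp at h2; linarith

lemma exp_series_bound {q : ℝ} (h0 : 0 ≤ q) (h1 : q ≤ 1) :
    1 + q + q^2/2 + q^3/6 - 5*q^4/96 ≤ Real.exp q ∧
    Real.exp q ≤ 1 + q + q^2/2 + q^3/6 + 5*q^4/96 := by
  have hb := Real.exp_bound (x := q) (by rw [abs_of_nonneg h0]; exact h1) (n := 4) (by norm_num)
  rw [abs_of_nonneg h0] at hb
  have hs : ∑ m ∈ Finset.range 4, q ^ m / (Nat.factorial m) = 1 + q + q^2/2 + q^3/6 := by
    norm_num [Finset.sum_range_succ, Nat.factorial]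
  rw [hs] at hb
  have hb' : |Real.exp q - (1 + q + q^2/2 + q^3/6)| ≤ 5*q^4/96 := by
    refine hb.trans ?_
    norm_num [Nat.factorial]
    linarith [sq_nonneg (q^2)]
  rw [abs_le] at hb'
  constructor <;> linarith [hb'.1, hb'.2]

lemma quad_lower {a b c t t1 t2 : ℝ} (ha : a ≤ 0) (h1 : t1 ≤ t) (h2 : t ≤ t2)
    (hA : 0 ≤ a*t1^2 + b*t1 + c) (hB : 0 ≤ a*t2^2 + b*t2 + c) :
    0 ≤ a*t^2 + b*t + c := by
  rcases eq_or_lt_of_le (h1.trans h2) with h | h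
  · have ht1 : t = t1 := le_antisymm (h ▸ h2) h1
    rw [ht1]; exact hA
  · have e1 : 0 ≤ (a*t1^2 + b*t1 + c)*(t2 - t) := mul_nonneg hA (by linarith)
    have e2 : 0 ≤ (a*t2^2 + b*t2 + c)*(t - t1) := mul_nonneg hB (by linarith)
    have e3 : 0 ≤ (t - t1)*(t2 - t)*(-a)*(t2 - t1) := by
      apply mul_nonneg; apply mul_nonneg; apply mul_nonneg
      all_goals linarith
    nlinarith [e1, e2, e3, h]

/-- key lemma: `B(q) ≥ (1+q)/q²` in cleared form. -/
lemma keyB {q : ℝ} (h0 : 0 < q) (h1 : q ≤ 1) :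
    (1+q) * (1 - (1-q) * Real.exp q)^2
      ≤ q^2 * Real.exp q * ((1-q)^2 * Real.exp q - (1 - q - q^2)) := by
  set T := Real.exp q with hT
  obtain ⟨hlo, hhi⟩ := exp_series_bound h0.le h1
  set t1 : ℝ := 1 + q + q^2/2 + q^3/6 - 5*q^4/96 with ht1
  set t2 : ℝ := 1 + q + q^2/2 + q^3/6 + 5*q^4/96 with ht2
  set a : ℝ := q^2*(1-q)^2 - (1+q)*(1-q)^2 with haa
  set b : ℝ := -(q^2*(1-q-q^2)) + 2*(1+q)*(1-q) with hbb
  set c : ℝ := -(1+q) with hcc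
  have key : 0 ≤ a*T^2 + b*T + c := by
    apply quad_lower (t1 := t1) (t2 := t2) _ hlo hhi
    · -- endpoint at t1
      have hid : a*t1^2 + b*t1 + c =
          q^4 * (1/4 + q/12 - 19*q^2/144 + 37*q^3/288 + 175*q^4/1024 + 953*q^5/9216
            + 17*q^6/512 - 235*q^7/9216 + 25*q^8/9216) := by
        rw [haa, hbb, hcc, ht1]; ring
      rw [hid]
      have h2 : q^2 ≤ 1 := by nlinarith
      have h7 : q^7 ≤ 1 := by
        calc q^7 ≤ 1^7 := pow_le_pow_left₀ h0.le h1 7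
        _ = 1 := one_pow 7
      have hq3 : 0 ≤ q^3 := by positivity
      have hq4 : 0 ≤ q^4 := by positivity
      have hq5 : 0 ≤ q^5 := by positivity
      have hq6 : 0 ≤ q^6 := by positivity
      have hq8 : 0 ≤ q^8 := by positivity
      nlinarith [hq4, h2, h7]
    · -- endpoint at t2
      have hid : a*t2^2 + b*t2 + c =
          q^4 * (1/4 + q/12 + 11*q^2/144 + 3*q^3/32 + 935*q^4/9216 + 211*q^5/3072
            + 17*q^6/512 + 85*q^7/9216 + 25*q^8/9216) := by
        rw [haa, hbb, hcc, ht2]; ring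
      rw [hid]; positivity
    · rw [haa]
      nlinarith [mul_nonneg (sq_nonneg (1-q)) (show (0:ℝ) ≤ 1 + q - q^2 by nlinarith)]
  have hid2 : q^2 * T * ((1-q)^2 * T - (1 - q - q^2)) - (1+q) * (1 - (1-q) * T)^2
      = a*T^2 + b*T + c := by rw [haa, hbb, hcc]; ring
  linarith [key, hid2.ge, hid2.le]

lemma quintic_pos {p : ℝ} (hp : 2.1 ≤ p) :
    0 < 4*p^5 + 3*p^4 - 12*p^3 - 18*p^2 - 8*p - 1 := by
  nlinarith [sq_nonneg (p - 2.1), sq_nonneg p, mul_pos (show (0:ℝ) < p by linarith) (show (0:ℝ) < p by linarith), pow_pos (show (0:ℝ) < p by linarith) 3, mul_nonneg (mul_nonneg (sub_nonneg.2 hp) (sub_nonneg.2 hp)) (sub_nonneg.2 hp), mul_nonneg (sub_nonneg.2 hp) (sq_nonneg (p-2.1)), mul_nonneg (mul_nonneg (sub_nonneg.2 hp) (sub_nonneg.2 hp)) (sq_nonneg p), mul_nonneg (sq_nonneg (p-2.1)) (sq_nonneg p)]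

lemma keyA {p F : ℝ} (hp : 2.1 ≤ p) (hF : 0 ≤ F) :
    0 < (p^2 - p - 1)*F^2 + (p - 3*p^3)*F + (2*p^3 + 4*p^4 + p^5) := by
  have ha : 0 < p^2 - p - 1 := by nlinarith
  have hq := quintic_pos hp
  have hdisc : (p - 3*p^3)^2 < 4*(p^2 - p - 1)*(2*p^3 + 4*p^4 + p^5) := by nlinarith
  nlinarith [sq_nonneg (2*(p^2 - p - 1)*F + (p - 3*p^3)), mul_nonneg ha.le (mul_nonneg hF hF)]

lemma dom_ge {p : ℝ} (hp : 0 < p) (hdom : (1 + p)^2 < Real.exp p) : 2.1 ≤ p := by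
  by_contra h
  push_neg at h
  have key : Real.exp (p/2) ≤ 1 + p := by
    rcases le_or_gt p 1 with hc | hc
    · -- p/2 ≤ 1/2 : exp x ≤ 1/(1-x) ≤ 1+2x
      have hx : Real.exp (-(p/2)) ≥ 1 - p/2 := by
        have := Real.add_one_le_exp (-(p/2)); linarith
      have hpos : (0:ℝ) < 1 - p/2 := by linarith
      have h2 : Real.exp (p/2) ≤ 1/(1 - p/2) := by
        rw [le_div_iff₀ hpos]
        have := Real.exp_pos (p/2)
        calc Real.exp (p/2) * (1 - p/2) ≤ Real.exp (p/2) * Real.exp (-(p/2)) := by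
              apply mul_le_mul_of_nonneg_left hx (Real.exp_pos _).le
        _ = 1 := by rw [← Real.exp_add]; simp
      refine h2.trans ?_
      rw [div_le_iff₀ hpos]; nlinarith
    · -- 1/2 < p/2 ≤ 1.05 : exp x = exp 1.05 / exp (1.05 - x) ≤ 3.1/(1+(1.05-x))
      have h105 : Real.exp (1.05) ≤ 3.1 := by
        have h1 : Real.exp (1.05) = Real.exp 1 * Real.exp (0.05) := by
          rw [← Real.exp_add]; norm_num
        have h2 : Real.exp (0.05) ≤ 20/19 := by
          have hx : (1:ℝ) - 0.05 ≤ Real.exp (-(0.05:ℝ)) := by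
            have := Real.add_one_le_exp (-(0.05:ℝ)); linarith
          have hp2 : Real.exp ((0.05:ℝ)) * Real.exp (-(0.05:ℝ)) = 1 := by
            rw [← Real.exp_add]; simp
          nlinarith [Real.exp_pos ((0.05:ℝ)), Real.exp_pos (-(0.05:ℝ))]
        have h3 := Real.exp_one_lt_d9
        nlinarith [Real.exp_pos (0.05:ℝ)]
      have hy : (0:ℝ) ≤ 1.05 - p/2 := by linarith
      have hinv : Real.exp (p/2) * (1 + (1.05 - p/2)) ≤ Real.exp (1.05) := by
        have := Real.add_one_le_exp (1.05 - p/2)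
        have h4 : Real.exp (p/2) * Real.exp (1.05 - p/2) = Real.exp (1.05) := by
          rw [← Real.exp_add]; norm_num
        nlinarith [Real.exp_pos (p/2)]
      have h5 : (0:ℝ) < 1 + (1.05 - p/2) := by linarith
      have h6 : Real.exp (p/2) ≤ 3.1 / (1 + (1.05 - p/2)) := by
        rw [le_div_iff₀ h5]; linarith
      refine h6.trans ?_
      rw [div_le_iff₀ h5]; nlinarith
  have hsq : Real.exp p = (Real.exp (p/2))^2 := by
    rw [sq, ← Real.exp_add]; norm_num
  have : Real.exp p ≤ (1 + p)^2 := by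
    rw [hsq]
    have := Real.exp_pos (p/2)
    nlinarith [key]
  linarith

lemma hasDerivAt_Q1 {p : ℝ} (hp : 0 < p) :
    HasDerivAt Q1 (((1+2*p)*(Real.exp p - 1 - p) - (p + p^2)*(Real.exp p - 1))
      / (Real.exp p - 1 - p)^2) p := by
  have hN : HasDerivAt (fun x : ℝ => x + x^2) (1 + 2*p) p := by
    exact ((hasDerivAt_id' p).add (hasDerivAt_pow 2 p)).congr_deriv (by norm_num)
  have hD : HasDerivAt (fun x : ℝ => Real.exp x - 1 - x) (Real.exp p - 1) p := by
    exact ((Real.hasDerivAt_exp p).sub_const 1).sub (hasDerivAt_id' p)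
  have := hN.div hD (ne_of_gt (expD_pos hp))
  exact this

lemma hasDerivAt_P2 {q : ℝ} (h0 : 0 < q) (h1 : q < 1) :
    HasDerivAt P2
      ((((1-2*q)*Real.exp q + (q - q^2)*Real.exp q) * (1 - (1-q)*Real.exp q)
        - (q - q^2)*Real.exp q * (0 - ((-1)*Real.exp q + (1-q)*Real.exp q)))
      / (1 - (1-q)*Real.exp q)^2) q := by
  have hM : HasDerivAt (fun x : ℝ => (x - x^2) * Real.exp x)
      ((1-2*q)*Real.exp q + (q - q^2)*Real.exp q) q := by
    have h1' : HasDerivAt (fun x : ℝ => x - x^2) (1 - 2*q) q := by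
      exact ((hasDerivAt_id' q).sub (hasDerivAt_pow 2 q)).congr_deriv (by norm_num)
    exact h1'.mul (Real.hasDerivAt_exp q)
  have hK : HasDerivAt (fun x : ℝ => 1 - (1-x)*Real.exp x)
      (0 - ((-1)*Real.exp q + (1-q)*Real.exp q)) q := by
    have h2 : HasDerivAt (fun x : ℝ => (1-x)*Real.exp x)
        ((-1)*Real.exp q + (1-q)*Real.exp q) q := by
      have h3 : HasDerivAt (fun x : ℝ => 1 - x) (-1) q := by
        exact ((hasDerivAt_const q (1:ℝ)).sub (hasDerivAt_id' q)).congr_deriv (by norm_num)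
      exact h3.mul (Real.hasDerivAt_exp q)
    exact (hasDerivAt_const q (1:ℝ)).sub h2
  have := hM.div hK (ne_of_gt (K_pos h1 h0))
  exact this

lemma Zf_deriv_neg {p : ℝ} (hp : 0 < p) (hdom : (1+p)^2 < Real.exp p) :
    ∃ z, HasDerivAt Zf z p ∧ z < 0 := by
  have hD : 0 < Real.exp p - 1 - p := expD_pos hp
  have hp21 : 2.1 ≤ p := dom_ge hp hdom
  set E := Real.exp p with hE
  set D : ℝ := E - 1 - p with hDdef
  set N : ℝ := p + p^2 with hNdef
  have hN : 0 < N := by positivity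
  have hq0 : 0 < Q1 p := by rw [Q1]; exact div_pos hN hD
  have hq1 : Q1 p < 1 := by
    rw [Q1, div_lt_one hD]
    nlinarith [hdom]
  set q := Q1 p with hqdef
  have hqDN : q * D = N := by
    rw [hqdef, Q1]; exact div_mul_cancel₀ _ (ne_of_gt hD)
  set T := Real.exp q with hT
  have hTpos : 0 < T := Real.exp_pos q
  set K : ℝ := 1 - (1-q)*T with hKdef
  have hK : 0 < K := K_pos hq1 hq0
  have hQd := hasDerivAt_Q1 hp
  have hPd := hasDerivAt_P2 hq0 hq1
  have hcomp := HasDerivAt.comp p hPd hQd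
  have hZd : HasDerivAt Zf ((1:ℝ) -
      ((((1-2*q)*T + (q - q^2)*T) * K - (q - q^2)*T * (0 - ((-1)*T + (1-q)*T))) / K^2)
      * (((1+2*p)*D - N*(E - 1)) / D^2)) p := by
    have := (hasDerivAt_id p).sub hcomp
    exact this
  refine ⟨_, hZd, ?_⟩
  -- now the sign
  set U : ℝ := T*((1-q)^2*T - (1 - q - q^2)) with hUdef
  set R : ℝ := (E-1)*(p^2 - p - 1) + p + 2*p^2 with hRdef
  have hprod : ((((1-2*q)*T + (q - q^2)*T) * K - (q - q^2)*T * (0 - ((-1)*T + (1-q)*T))) / K^2)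
      * (((1+2*p)*D - N*(E - 1)) / D^2) = (U*R)/(K^2*D^2) := by
    have hnum1 : (((1-2*q)*T + (q - q^2)*T) * K - (q - q^2)*T * (0 - ((-1)*T + (1-q)*T))) = -U := by
      rw [hUdef, hKdef]; ring
    have hnum2 : ((1+2*p)*D - N*(E - 1)) = -R := by
      rw [hRdef, hNdef, hDdef]; ring
    rw [hnum1, hnum2]
    field_simp
  rw [hprod]
  have hF : 0 ≤ E - 1 := by
    have := Real.add_one_le_exp p; rw [← hE] at this; linarith
  have hG := keyA hp21 hF
  have ha : 0 < p^2 - p - 1 := by nlinarith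
  have hR : 0 < R := by rw [hRdef]; nlinarith
  have hkB : (1+q)*K^2 ≤ q^2*U := by
    have := keyB hq0 hq1.le
    rw [← hT, ← hKdef] at this
    rw [hUdef]; nlinarith [this]
  have hgoal : K^2*D^2 < U*R := by
    have step1 : N^2*D < R*(D+N) := by
      have hid : R*(D+N) - N^2*D =
          (p^2 - p - 1)*(E-1)^2 + (p - 3*p^3)*(E-1) + (2*p^3 + 4*p^4 + p^5) := by
        rw [hRdef, hNdef, hDdef]; ring
      nlinarith [hG, hid]
    -- q^2*D^2 = N^2, (1+q)*D = D + N
    have hq2D2 : q^2*D^2 = N^2 := by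
      have : (q*D)^2 = N^2 := by rw [hqDN]
      nlinarith [this]
    have h1qD : (1+q)*D = D + N := by
      have := hqDN; nlinarith [this]
    -- q^2*D^2*D < (1+q)*R*D  from step1
    have step2 : q^2*D^2 < (1+q)*R := by
      have h3 : q^2*D^2*D < ((1+q)*R)*D := by
        rw [hq2D2]
        calc N^2*D < R*(D+N) := step1
        _ = ((1+q)*R)*D := by rw [← h1qD]; ring
      exact lt_of_mul_lt_mul_right h3 hD.le
    -- multiply hkB by R and combine
    have step3 : q^2*(K^2*D^2) < q^2*(U*R) := by
      have l1 : (1+q)*K^2*R ≤ q^2*U*R := by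
        apply mul_le_mul_of_nonneg_right hkB hR.le
      have l2 : q^2*D^2*K^2 < (1+q)*R*K^2 := by
        apply mul_lt_mul_of_pos_right step2 (by positivity)
      nlinarith [l1, l2]
    have hq2 : 0 < q^2 := by positivity
    exact lt_of_mul_lt_mul_left step3 hq2.le
  have hpos : 0 < K^2*D^2 := by positivity
  have : 1 < (U*R)/(K^2*D^2) := (one_lt_div hpos).2 hgoal
  linarith

lemma exp4_bounds : 54.598 < Real.exp 4 ∧ Real.exp 4 < 54.5981501 := by
  have h4 : Real.exp 4 = (Real.exp 1)^4 := by
    rw [← Real.exp_nat_mul]; norm_num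
  have hlo := Real.exp_one_gt_d9
  have hhi := Real.exp_one_lt_d9
  constructor
  · rw [h4]
    calc (54.598:ℝ) < 2.7182818283^4 := by norm_num
    _ ≤ (Real.exp 1)^4 := by
        apply pow_le_pow_left₀ (by norm_num) hlo.le
  · rw [h4]
    calc (Real.exp 1)^4 ≤ 2.7182818286^4 := by
          apply pow_le_pow_left₀ (Real.exp_pos 1).le hhi.le
    _ < 54.5981501 := by norm_num

lemma exp5_bounds : 148.413 < Real.exp 5 ∧ Real.exp 5 < 148.41316 := by
  have h5 : Real.exp 5 = (Real.exp 1)^5 := by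
    rw [← Real.exp_nat_mul]; norm_num
  have hlo := Real.exp_one_gt_d9
  have hhi := Real.exp_one_lt_d9
  constructor
  · rw [h5]
    calc (148.413:ℝ) < 2.7182818283^5 := by norm_num
    _ ≤ (Real.exp 1)^5 := by
        apply pow_le_pow_left₀ (by norm_num) hlo.le
  · rw [h5]
    calc (Real.exp 1)^5 ≤ 2.7182818286^5 := by
          apply pow_le_pow_left₀ (Real.exp_pos 1).le hhi.le
    _ < 148.41316 := by norm_num

lemma Q1_4_bounds : 0.4032 < Q1 4 ∧ Q1 4 < 0.40325 := by
  obtain ⟨hlo, hhi⟩ := exp4_bounds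
  have hD : (0:ℝ) < Real.exp 4 - 1 - 4 := by linarith
  rw [Q1]
  constructor
  · rw [lt_div_iff₀ hD]; nlinarith
  · rw [div_lt_iff₀ hD]; nlinarith

lemma Q1_5_bounds : 0.2106 < Q1 5 ∧ Q1 5 < 0.2107 := by
  obtain ⟨hlo, hhi⟩ := exp5_bounds
  have hD : (0:ℝ) < Real.exp 5 - 1 - 5 := by linarith
  rw [Q1]
  constructor
  · rw [lt_div_iff₀ hD]; nlinarith
  · rw [div_lt_iff₀ hD]; nlinarith

lemma Zf_4_pos : 0 < Zf 4 := by
  obtain ⟨hq1, hq2⟩ := Q1_4_bounds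
  set q := Q1 4 with hq
  have hq0 : 0 < q := by linarith
  have hqlt1 : q < 1 := by linarith
  have hK : 0 < 1 - (1-q)*Real.exp q := K_pos hqlt1 hq0
  obtain ⟨-, hT⟩ := exp_series_bound hq0.le (by linarith)
  set T := Real.exp q with hTdef
  have hTpos : 0 < T := Real.exp_pos q
  have p2 : q^2 < 0.40325^2 := by nlinarith
  have p3 : q^3 < 0.40325^3 := by nlinarith
  have p4 : q^4 < 0.40325^4 := by nlinarith
  have hTub : T < 1.49687 := by nlinarith [hT]
  rw [Zf, P2, sub_pos, div_lt_iff₀ hK]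
  nlinarith [mul_lt_mul_of_pos_right hTub (show (0:ℝ) < 4 - 3*q - q^2 by nlinarith), hTpos]

lemma Zf_5_neg : Zf 5 < 0 := by
  obtain ⟨hq1, hq2⟩ := Q1_5_bounds
  set q := Q1 5 with hq
  have hq0 : 0 < q := by linarith
  have hqlt1 : q < 1 := by linarith
  have hK : 0 < 1 - (1-q)*Real.exp q := K_pos hqlt1 hq0
  obtain ⟨hT, -⟩ := exp_series_bound hq0.le (by linarith)
  set T := Real.exp q with hTdef
  have hTpos : 0 < T := Real.exp_pos q
  have p2 : 0.2106^2 < q^2 := by nlinarith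
  have p3 : 0.2106^3 < q^3 := by nlinarith
  have p4 : q^4 < 0.2107^4 := by nlinarith
  have hTlb : 1.23422 < T := by nlinarith [hT]
  rw [Zf, sub_neg, P2, lt_div_iff₀ hK]
  nlinarith [mul_lt_mul_of_pos_right hTlb (show (0:ℝ) < 5 - 4*q - q^2 by nlinarith), hTpos]

lemma dom_mono {p1 x : ℝ} (h1 : 1 ≤ p1) (hdom : (1+p1)^2 < Real.exp p1) (hle : p1 ≤ x) :
    (1+x)^2 < Real.exp x := by
  set s := x - p1 with hs
  have hs0 : 0 ≤ s := by rw [hs]; linarith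
  have hsplit : Real.exp x = Real.exp p1 * (Real.exp (s/2))^2 := by
    rw [sq, ← Real.exp_add, ← Real.exp_add]; congr 1; rw [hs]; ring
  have hexp2 : 1 + s/2 ≤ Real.exp (s/2) := by
    have := Real.add_one_le_exp (s/2); linarith
  have hA : 1 + x ≤ (1+p1)*(1+s/2) := by nlinarith
  have hp1pos : (0:ℝ) < 1 + p1 := by linarith
  have hB : ((1+x))^2 ≤ ((1+p1)*(1+s/2))^2 := by nlinarith
  rw [hsplit]
  have hC : ((1+p1)*(1+s/2))^2 < Real.exp p1 * (Real.exp (s/2))^2 := by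
    have e1 : (0:ℝ) < 1 + s/2 := by linarith
    have e2 : (1+s/2)^2 ≤ (Real.exp (s/2))^2 := by nlinarith [Real.exp_pos (s/2)]
    calc ((1+p1)*(1+s/2))^2 = (1+p1)^2*(1+s/2)^2 := by ring
    _ < Real.exp p1 * (1+s/2)^2 := by
        apply mul_lt_mul_of_pos_right hdom; positivity
    _ ≤ Real.exp p1 * (Real.exp (s/2))^2 := by
        apply mul_le_mul_of_nonneg_left e2 (Real.exp_pos p1).le
  linarith

lemma Zf_strict {p1 p2 : ℝ} (hp1 : 0 < p1) (hdom : (1+p1)^2 < Real.exp p1)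
    (hlt : p1 < p2) : Zf p2 < Zf p1 := by
  have h21 := dom_ge hp1 hdom
  have domx : ∀ x ∈ Set.Icc p1 p2, (1+x)^2 < Real.exp x :=
    fun x hx => dom_mono (by linarith) hdom hx.1
  have hd : ∀ x ∈ Set.Icc p1 p2, ∃ z, HasDerivAt Zf z x ∧ z < 0 :=
    fun x hx => Zf_deriv_neg (by have := hx.1; linarith) (domx x hx)
  have cont : ContinuousOn Zf (Set.Icc p1 p2) := fun x hx =>
    ((hd x hx).choose_spec.1.differentiableAt.continuousAt).continuousWithinAt
  have anti := strictAntiOn_of_deriv_neg (convex_Icc p1 p2) cont (fun x hx => by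
    rw [interior_Icc] at hx
    obtain ⟨z, hz, hzneg⟩ := hd x (Set.Ioo_subset_Icc_self hx)
    rw [hz.deriv]; exact hzneg)
  exact anti ⟨le_refl p1, hlt.le⟩ ⟨hlt.le, le_refl p2⟩ hlt

/-- from the (p,q) system to `Q1/Zf` facts -/
lemma sys_to_Z {p q : ℝ} (hp : 0 < p) (hq0 : 0 < q) (hq1 : q < 1)
    (hI : q * Real.exp p = (1+p)*(p+q)) (hII : (p+q)*((1-q)*Real.exp q) = p) :
    Q1 p = q ∧ Zf p = 0 ∧ (1+p)^2 < Real.exp p := by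
  have hD := expD_pos hp
  have hQ : Q1 p = q := by
    rw [Q1, div_eq_iff (ne_of_gt hD)]
    linear_combination -hI
  have hdom : (1+p)^2 < Real.exp p := by
    have hqD : q * (Real.exp p - 1 - p) = p + p^2 := by linear_combination hI
    nlinarith [hqD, hD]
  have hK : 0 < 1 - (1-q)*Real.exp q := K_pos hq1 hq0
  have hZ : Zf p = 0 := by
    rw [Zf, hQ, P2, sub_eq_zero, eq_comm, div_eq_iff (ne_of_gt hK)]
    linear_combination hII
  exact ⟨hQ, hZ, hdom⟩

lemma orig_iff {α γ : ℝ} (hα : 1 < α) (hγ : 1 < γ) :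
    (γ * fLD γ + (1/α) * fLD (1/α) = 1 ∧ fLD γ + fLD (1/α) = 1)
    ↔ ((1 - 1/α) * Real.exp (γ-1) = (1+(γ-1))*((γ-1) + (1 - 1/α))
        ∧ ((γ-1) + (1 - 1/α))*((1-(1 - 1/α)) * Real.exp (1 - 1/α)) = γ-1) := by
  have hα0 : (0:ℝ) < α := by linarith
  set u : ℝ := 1/α with hu
  have hu0 : 0 < u := by rw [hu]; positivity
  have hu1 : u < 1 := by rw [hu, div_lt_one hα0]; linarith
  set E : ℝ := Real.exp (γ-1) with hE
  have hEpos : 0 < E := Real.exp_pos _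
  have e1 : Real.exp (1-γ) * E = 1 := by rw [hE, ← Real.exp_add]; norm_num
  set T : ℝ := Real.exp (1-u) with hT
  have hTpos : 0 < T := Real.exp_pos _
  have hne : (1-u)*E ≠ 0 := by
    apply ne_of_gt; apply mul_pos _ hEpos; linarith
  constructor
  · rintro ⟨h1, h2⟩
    rw [fLD, fLD] at h1 h2
    have h2' : γ + u*(T*E) = E := by
      rw [hT]; linear_combination E*h2 - γ*e1
    have h1' : γ^2 + u^2*(T*E) = E := by
      rw [hT]; linear_combination E*h1 - γ^2*e1
    have hkey1 : (1-u)*E = γ*(γ-u) := by linear_combination u*h2' - h1'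
    constructor
    · linear_combination hkey1
    · have key : ((γ-u)*(u*T) - (γ-1)) * ((1-u)*E) = 0 := by
        linear_combination -(γ-u)*h1' + (γ-u)*h2' - (γ-1)*hkey1
      have := (mul_eq_zero.mp key).resolve_right hne
      linear_combination this
  · rintro ⟨hI, hII⟩
    rw [fLD, fLD]
    have hI' : (1-u)*E = γ*(γ-u) := by linear_combination hI
    have hII' : (γ-u)*(u*T) = γ-1 := by linear_combination hII
    constructor
    · have key1 : (γ*(γ*Real.exp (1-γ)) + u*(u*T) - 1) * ((1-u)*E) = 0 := by
        linear_combination γ^2*(1-u)*e1 + u*γ*hII' + (u^2*T-1)*hI'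
      have := (mul_eq_zero.mp key1).resolve_right hne
      linear_combination this
    · have key2 : (γ*Real.exp (1-γ) + u*T - 1) * ((1-u)*E) = 0 := by
        linear_combination γ*hII' + (u*T-1)*hI' + γ*(1-u)*e1
      have := (mul_eq_zero.mp key2).resolve_right hne
      linear_combination this

lemma Q1_mem {p : ℝ} (hp : 0 < p) (hdom : (1+p)^2 < Real.exp p) :
    0 < Q1 p ∧ Q1 p < 1 := by
  have hD := expD_pos hp
  constructor
  · rw [Q1]; apply div_pos (by nlinarith) hD
  · rw [Q1, div_lt_one hD]; nlinarith

/-- There exists exactly one pair `(α, γ) ∈ (1,∞) × (1,∞)` satisfying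
`γ·f(γ) + (1/α)·f(1/α) = 1` and `f(γ) + f(1/α) = 1`. -/
theorem stmt_0 :
    ∃! αγ : ℝ × ℝ, (1 < αγ.1 ∧ 1 < αγ.2) ∧
      αγ.2 * fLD αγ.2 + (1 / αγ.1) * fLD (1 / αγ.1) = 1 ∧
      fLD αγ.2 + fLD (1 / αγ.1) = 1 := by
  have hdom45 : ∀ x ∈ Set.Icc (4:ℝ) 5, (1+x)^2 < Real.exp x := by
    intro x hx
    have h4 : (54.598:ℝ) < Real.exp 4 := exp4_bounds.1
    have hle : Real.exp 4 ≤ Real.exp x := Real.exp_le_exp.2 hx.1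
    nlinarith [hx.1, hx.2]
  have hcont : ContinuousOn Zf (Set.Icc 4 5) := fun x hx =>
    ((Zf_deriv_neg (by have := hx.1; linarith) (hdom45 x hx)).choose_spec.1.differentiableAt.continuousAt).continuousWithinAt
  have hivt := intermediate_value_Icc' (by norm_num : (4:ℝ) ≤ 5) hcont
  obtain ⟨ps, hps, hZps⟩ := hivt ⟨Zf_5_neg.le, Zf_4_pos.le⟩
  have hp0 : 0 < ps := by have := hps.1; linarith
  have hdomp : (1+ps)^2 < Real.exp ps := hdom45 ps hps
  obtain ⟨hq0, hq1⟩ := Q1_mem hp0 hdomp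
  set q : ℝ := Q1 ps with hqdef
  have hD := expD_pos hp0
  have hI : q * Real.exp ps = (1+ps)*(ps+q) := by
    have : q * (Real.exp ps - 1 - ps) = ps + ps^2 := by
      rw [hqdef, Q1]; field_simp
    linear_combination this
  have hK : 0 < 1 - (1-q)*Real.exp q := K_pos hq1 hq0
  have hII : (ps+q)*((1-q)*Real.exp q) = ps := by
    have hP2 : P2 q = ps := by
      have : Zf ps = 0 := hZps
      rw [Zf, ← hqdef, sub_eq_zero] at this
      exact this.symm
    rw [P2, div_eq_iff (ne_of_gt hK)] at hP2
    linear_combination hP2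
  set αs : ℝ := (1-q)⁻¹ with hαsdef
  set γs : ℝ := 1 + ps with hγsdef
  have h1q : 0 < 1 - q := by linarith
  have hαs : 1 < αs := by
    rw [hαsdef]
    rw [one_lt_inv_iff₀]
    exact ⟨h1q, by linarith⟩
  have hγs : 1 < γs := by rw [hγsdef]; linarith
  have h1α : 1/αs = 1-q := by rw [hαsdef, one_div, inv_inv]
  refine ⟨(αs, γs), ⟨⟨hαs, hγs⟩, ?_⟩, ?_⟩
  · have := (orig_iff hαs hγs).mpr ?_
    · exact this
    constructor
    · rw [h1α, hγsdef, show (1:ℝ)+ps-1 = ps by ring, show (1:ℝ)-(1-q) = q by ring]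
      linear_combination hI
    · rw [h1α, hγsdef, show (1:ℝ)+ps-1 = ps by ring, show (1:ℝ)-(1-q) = q by ring]
      linear_combination hII
  · rintro ⟨α', γ'⟩ ⟨⟨hα', hγ'⟩, hy1, hy2⟩
    obtain ⟨hIy, hIIy⟩ := (orig_iff hα' hγ').mp ⟨hy1, hy2⟩
    set p' : ℝ := γ' - 1 with hp'def
    set q' : ℝ := 1 - 1/α' with hq'def
    have hα'0 : (0:ℝ) < α' := by linarith
    have hu'0 : 0 < 1/α' := by positivity
    have hu'1 : 1/α' < 1 := by rw [div_lt_one hα'0]; linarith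
    have hp'0 : 0 < p' := by rw [hp'def]; linarith
    have hq'0 : 0 < q' := by rw [hq'def]; linarith
    have hq'1 : q' < 1 := by rw [hq'def]; linarith
    obtain ⟨hQ1y, hZy, hdomy⟩ := sys_to_Z hp'0 hq'0 hq'1 hIy hIIy
    have hpeq : p' = ps := by
      rcases lt_trichotomy p' ps with h | h | h
      · exfalso
        have := Zf_strict hp'0 hdomy h
        rw [hZy, hZps] at this; exact lt_irrefl 0 this
      · exact h
      · exfalso
        have := Zf_strict hp0 hdomp h
        rw [hZy, hZps] at this; exact lt_irrefl 0 this
    have hqeq : q' = q := by rw [← hQ1y, hqdef, hpeq]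
    have hγeq : γ' = γs := by rw [hγsdef, ← hpeq, hp'def]; ring
    have hαeq : α' = αs := by
      have h1 : 1/α' = 1-q := by
        rw [← hqeq, hq'def]; ring
      have h2 : α'⁻¹ = αs⁻¹ := by
        rw [hαsdef, inv_inv, ← one_div, h1]
      exact inv_injective h2
    simp [Prod.ext_iff, hαeq, hγeq]
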